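/- Let F : A ⥤ B be a lax epimorphism between small categories. Then the induced function on connected components, sending the zigzag-class of an object a of A to the zigzag-class of F.obj a in B, is a bijection from the set of connected components of A to the set of connected components of B. -/

import Mathlib

open CategoryTheory

universe v₄ u₄ u

/-- `F : A ⥤ B` is a lax epimorphism if precomposition with `F` is fully faithful
on all functor categories. -/
def LaxEpi {A B : Type u} [SmallCategory A] [SmallCategory B] (F : A ⥤ B) : Prop :=
  ∀ (C : Type u₄) (_ : Category.{v₄} C),
    ((Functor.whiskeringLeft A B C).obj F).Full ∧ ((Functor.whiskeringLeft A B C).obj F).Faithful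

/-- Morphisms of an auxiliary two-object category: `false` and `true` are objects,
each with only the identity endomorphism, and there are two parallel arrows
`false ⟶ true` indexed by `Bool`. -/
inductive Hm : Bool → Bool → Type where
  | idf : Hm false false
  | idt : Hm true true
  | ar (s : Bool) : Hm false true

namespace Hm

def idh : (a : Bool) → Hm a a
  | false => .idf
  | true => .idt

def comp : {a b c : Bool} → Hm a b → Hm b c → Hm a c
  | _, _, _, .idf, g => g
  | _, _, _, .ar s, .idt => .ar s
  | _, _, _, .idt, .idt => .idt

lemma id_comp : ∀ {a b : Bool} (f : Hm a b), (idh a).comp f = f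
  | _, _, .idf => rfl
  | _, _, .idt => rfl
  | _, _, .ar _ => rfl

lemma comp_id : ∀ {a b : Bool} (f : Hm a b), f.comp (idh b) = f
  | _, _, .idf => rfl
  | _, _, .idt => rfl
  | _, _, .ar _ => rfl

lemma assoc : ∀ {a b c d : Bool} (f : Hm a b) (g : Hm b c) (h : Hm c d),
    (f.comp g).comp h = f.comp (g.comp h)
  | _, _, _, _, .idf, _, _ => rfl
  | _, _, _, _, .idt, .idt, .idt => rfl
  | _, _, _, _, .ar _, .idt, .idt => rfl

/-- Read off the `Bool` index of an arrow `false ⟶ true`. -/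
def read : Hm false true → Bool
  | .ar s => s

@[simp] lemma read_ar (s : Bool) : read (.ar s) = s := rfl

lemma ar_read (f : Hm false true) : Hm.ar (read f) = f := by cases f; rfl

end Hm

/-- The two-object category, with objects lifted to `Type u₄` and hom-sets lifted
to `Type v₄`. -/
instance twoCat : Category.{v₄} (ULift.{u₄} Bool) where
  Hom a b := ULift.{v₄} (Hm a.down b.down)
  id a := ⟨Hm.idh a.down⟩
  comp f g := ⟨f.down.comp g.down⟩
  id_comp f := congrArg ULift.up (Hm.id_comp f.down)
  comp_id f := congrArg ULift.up (Hm.comp_id f.down)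
  assoc f g h := congrArg ULift.up (Hm.assoc f.down g.down h.down)

section Aux

variable {J : Type u} [SmallCategory J]

/-- The constant-value natural transformation determined by a function on
connected components. -/
def natOfFun (h : ConnectedComponents J → Bool) :
    (Functor.const J).obj (ULift.up.{u₄} false) ⟶ (Functor.const J).obj (ULift.up true) where
  app j := ⟨Hm.ar (h (Quotient.mk (Zigzag.setoid _) j))⟩
  naturality j j' f := by
    have : Quotient.mk (Zigzag.setoid J) j = Quotient.mk (Zigzag.setoid J) j' :=
      Quotient.sound (Zigzag.of_hom f)
    simp [this]

/-- The function on connected components determined by a natural transformation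
between the two constant functors. -/
def funOfNat
    (θ : (Functor.const J).obj (ULift.up.{u₄} false) ⟶ (Functor.const J).obj (ULift.up true)) :
    ConnectedComponents J → Bool :=
  Quotient.lift (fun j => Hm.read (θ.app j).down) (by
    intro j j' hz
    have : ∀ {x y : J} (f : x ⟶ y), Hm.read (θ.app x).down = Hm.read (θ.app y).down := by
      intro x y f
      have h2 : θ.app x = θ.app y := by
        have := θ.naturality f
        simp at this
        simpa using this.symm
      rw [h2]
    induction hz with
    | refl => rfl
    | tail _ r ih =>
      rcases r with ⟨⟨f⟩⟩ | ⟨⟨f⟩⟩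
      · exact ih.trans (this f)
      · exact ih.trans (this f).symm)

lemma funOfNat_natOfFun (h : ConnectedComponents J → Bool) : funOfNat (natOfFun.{u₄} h) = h := by
  funext x
  obtain ⟨j, rfl⟩ := Quotient.exists_rep x
  rfl

end Aux

/-- A lax epimorphism (i.e. Cauchy dense functor) between small categories induces
a bijection on connected components. -/
theorem laxEpi_bijective_mapConnectedComponents
    {A B : Type u} [SmallCategory A] [SmallCategory B]
    (F : A ⥤ B) (hF : LaxEpi.{v₄, u₄} F) :
    Function.Bijective F.mapConnectedComponents := by
  classical
  obtain ⟨hFull, hFaithful⟩ := hF (ULift.{u₄} Bool) twoCat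
  -- Key: precomposition with `F.mapConnectedComponents` on `Bool`-valued functions
  -- is surjective (from fullness) and injective (from faithfulness).
  have key_surj : ∀ h : ConnectedComponents A → Bool,
      ∃ g : ConnectedComponents B → Bool, g ∘ F.mapConnectedComponents = h := by
    intro h
    -- the nat trans between the constant functors precomposed with F
    let η : F ⋙ (Functor.const B).obj (ULift.up false) ⟶
        F ⋙ (Functor.const B).obj (ULift.up true) :=
      { app := fun a => ⟨Hm.ar (h (Quotient.mk (Zigzag.setoid A) a))⟩
        naturality := by
          intro a a' f
          have : Quotient.mk (Zigzag.setoid A) a = Quotient.mk (Zigzag.setoid A) a' :=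
            Quotient.sound (Zigzag.of_hom f)
          simp [this] }
    obtain ⟨θ, hθ⟩ := hFull.map_surjective (X := (Functor.const B).obj (ULift.up false))
      (Y := (Functor.const B).obj (ULift.up true)) η
    refine ⟨funOfNat θ, funext fun x => ?_⟩
    obtain ⟨a, rfl⟩ := Quotient.exists_rep x
    have happ : θ.app (F.obj a) = η.app a := congrArg (fun σ => σ.app a) hθ
    show Hm.read (θ.app (F.obj a)).down = _
    rw [happ]
    rfl
  have key_inj : ∀ g g' : ConnectedComponents B → Bool,
      g ∘ F.mapConnectedComponents = g' ∘ F.mapConnectedComponents → g = g' := by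
    intro g g' hgg
    have : CategoryStruct.comp (obj := B ⥤ ULift.{u₄} Bool) (natOfFun g) (𝟙 _) = natOfFun g' := by
      apply hFaithful.map_injective (X := (Functor.const B).obj (ULift.up false))
        (Y := (Functor.const B).obj (ULift.up true))
      ext a
      show CategoryStruct.comp (obj := ULift.{u₄} Bool)
        ((natOfFun g).app (F.obj a)) (𝟙 _) = (natOfFun g').app (F.obj a)
      simp only [Category.comp_id]
      show (⟨Hm.ar (g (Quotient.mk _ (F.obj a)))⟩ : ULift.{v₄} _) = ⟨Hm.ar (g' _)⟩
      have := congrFun hgg (Quotient.mk (Zigzag.setoid A) a)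
      change g (F.mapConnectedComponents (Quotient.mk _ a)) =
        g' (F.mapConnectedComponents (Quotient.mk _ a)) at this
      rw [show (Quotient.mk (Zigzag.setoid B) (F.obj a)) =
        F.mapConnectedComponents (Quotient.mk _ a) from rfl, this]
    have h2 : natOfFun g = natOfFun g' := by rw [← this, Category.comp_id]
    have := congrArg funOfNat h2
    rwa [funOfNat_natOfFun, funOfNat_natOfFun] at this
  constructor
  · -- injectivity
    intro x y hxy
    by_contra hne
    obtain ⟨g, hg⟩ := key_surj (fun c => decide (c = x))
    have h1 := congrFun hg x
    have h2 := congrFun hg y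
    simp only [Function.comp_apply, hxy] at h1 h2
    rw [h1] at h2
    simp at h2
    exact hne h2.symm
  · -- surjectivity
    intro c
    by_contra hc
    push_neg at hc
    have : (fun c' => decide (c' = c)) ∘ F.mapConnectedComponents =
        (fun _ => false) ∘ F.mapConnectedComponents := by
      funext x
      simp only [Function.comp_apply, decide_eq_false_iff_not]
      exact hc x
    have := congrFun (key_inj _ _ this) c
    simp at this
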